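/- If f : [a,b] × [c,d] → ℝ is co-ordinated convex, then f((a+b)/2, (c+d)/2) ≤ (1/((b-a)(d-c))) ∫ₐᵇ∫_c^d f(x,y) dy dx ≤ (f(a,c) + f(a,d) + f(b,c) + f(b,d))/4. -/

import Mathlib

open Set MeasureTheory

lemma convex_comb_le {a b : ℝ} (hab : a < b) {g : ℝ → ℝ}
    (hg : ConvexOn ℝ (Icc a b) g) {x : ℝ} (hx : x ∈ Icc a b) :
    g x ≤ (b - x)/(b - a) * g a + (x - a)/(b - a) * g b := by
  have hba : (0:ℝ) < b - a := by linarith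
  have h1 : (0:ℝ) ≤ (b - x)/(b - a) := div_nonneg (by linarith [hx.2]) hba.le
  have h2 : (0:ℝ) ≤ (x - a)/(b - a) := div_nonneg (by linarith [hx.1]) hba.le
  have h3 : (b - x)/(b - a) + (x - a)/(b - a) = 1 := by field_simp; ring
  have h := hg.2 (left_mem_Icc.2 hab.le) (right_mem_Icc.2 hab.le) h1 h2 h3
  simp only [smul_eq_mul] at h
  have hxx : (b - x)/(b - a) * a + (x - a)/(b - a) * b = x := by
    rw [div_mul_eq_mul_div, div_mul_eq_mul_div, ← add_div, div_eq_iff hba.ne']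
    ring
  rwa [hxx] at h

lemma convex_le_max {a b : ℝ} (hab : a < b) {g : ℝ → ℝ}
    (hg : ConvexOn ℝ (Icc a b) g) {x : ℝ} (hx : x ∈ Icc a b) :
    g x ≤ max (g a) (g b) := by
  have h := convex_comb_le hab hg hx
  have hba : (0:ℝ) < b - a := by linarith
  have h1 : (0:ℝ) ≤ (b - x)/(b - a) := div_nonneg (by linarith [hx.2]) hba.le
  have h2 : (0:ℝ) ≤ (x - a)/(b - a) := div_nonneg (by linarith [hx.1]) hba.le
  have h3 : (b - x)/(b - a) + (x - a)/(b - a) = 1 := by field_simp; ring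
  have ha : g a ≤ max (g a) (g b) := le_max_left _ _
  have hb : g b ≤ max (g a) (g b) := le_max_right _ _
  have h4 : (b - x)/(b - a) * max (g a) (g b) + (x - a)/(b - a) * max (g a) (g b)
      = max (g a) (g b) := by rw [← add_mul, h3, one_mul]
  have h5 := mul_le_mul_of_nonneg_left ha h1
  have h6 := mul_le_mul_of_nonneg_left hb h2
  linarith

lemma convex_midpoint_le {a b : ℝ} (hab : a < b) {g : ℝ → ℝ}
    (hg : ConvexOn ℝ (Icc a b) g) {x : ℝ} (hx : x ∈ Icc a b) :
    2 * g ((a + b)/2) ≤ g x + g (a + b - x) := by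
  have hx' : a + b - x ∈ Icc a b := ⟨by linarith [hx.2], by linarith [hx.1]⟩
  have h := hg.2 hx hx' (by norm_num : (0:ℝ) ≤ 1/2) (by norm_num : (0:ℝ) ≤ 1/2) (by norm_num)
  simp only [smul_eq_mul] at h
  have hm : (1/2 : ℝ) * x + (1/2 : ℝ) * (a + b - x) = (a + b)/2 := by ring
  rw [hm] at h
  linarith

lemma convex_intervalIntegrable {a b : ℝ} (hab : a < b) {g : ℝ → ℝ}
    (hg : ConvexOn ℝ (Icc a b) g) : IntervalIntegrable g volume a b := by
  set M := max (g a) (g b) with hM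
  set L := 2 * g ((a + b)/2) - M with hL
  have hbound : ∀ x ∈ Icc a b, L ≤ g x ∧ g x ≤ M := by
    intro x hx
    refine ⟨?_, convex_le_max hab hg hx⟩
    have h1 := convex_midpoint_le hab hg hx
    have hx' : a + b - x ∈ Icc a b := ⟨by linarith [hx.2], by linarith [hx.1]⟩
    have h2 := convex_le_max hab hg hx'
    simp only [hL]; linarith
  have hcont : ContinuousOn g (Ioo a b) :=
    ConvexOn.continuousOn isOpen_Ioo (hg.subset Ioo_subset_Icc_self (convex_Ioo a b))
  have hmeas : AEStronglyMeasurable g (volume.restrict (Ioo a b)) :=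
    hcont.aestronglyMeasurable measurableSet_Ioo
  have hfin : HasFiniteIntegral g (volume.restrict (Ioo a b)) := by
    refine HasFiniteIntegral.restrict_of_bounded (C := max |M| |L|) ?_ ?_
    · simp [Real.volume_Ioo]
    · filter_upwards [ae_restrict_mem measurableSet_Ioo] with x hx
      obtain ⟨h1, h2⟩ := hbound x (Ioo_subset_Icc_self hx)
      rw [Real.norm_eq_abs, abs_le]
      constructor
      · calc -(max |M| |L|) ≤ -|L| := by simp
          _ ≤ L := neg_abs_le L
          _ ≤ g x := h1
      · calc g x ≤ M := h2
          _ ≤ |M| := le_abs_self M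
          _ ≤ max |M| |L| := le_max_left _ _
  rw [intervalIntegrable_iff_integrableOn_Ioo_of_le hab.le]
  exact ⟨hmeas, hfin⟩

open intervalIntegral in
lemma hh_upper {a b : ℝ} (hab : a < b) {g : ℝ → ℝ}
    (hg : ConvexOn ℝ (Icc a b) g) (hgi : IntervalIntegrable g volume a b) :
    ∫ x in a..b, g x ≤ (g a + g b)/2 * (b - a) := by
  have hba : (0:ℝ) < b - a := by linarith
  set ℓ : ℝ → ℝ := fun x => (b - x)/(b - a) * g a + (x - a)/(b - a) * g b with hℓ
  have hℓc : Continuous ℓ := by fun_prop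
  have hℓi : IntervalIntegrable ℓ volume a b := hℓc.intervalIntegrable a b
  have hmono : ∫ x in a..b, g x ≤ ∫ x in a..b, ℓ x :=
    intervalIntegral.integral_mono_on hab.le hgi hℓi (fun x hx => convex_comb_le hab hg hx)
  have hcalc : ∫ x in a..b, ℓ x = (g a + g b)/2 * (b - a) := by
    have h1 : ∫ x in a..b, ℓ x
        = ∫ x in a..b, ((g a * b - g b * a)/(b-a) + ((g b - g a)/(b-a)) * x) := by
      apply intervalIntegral.integral_congr
      intro x _
      simp only [hℓ]
      field_simp
      ring
    have h2i : IntervalIntegrable (fun x : ℝ => (g b - g a)/(b-a) * x) volume a b :=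
      Continuous.intervalIntegrable (by continuity) a b
    rw [h1, intervalIntegral.integral_add intervalIntegrable_const h2i,
      intervalIntegral.integral_const, intervalIntegral.integral_const_mul, integral_id,
      smul_eq_mul]
    field_simp
    ring
  linarith

lemma hh_lower {a b : ℝ} (hab : a < b) {g : ℝ → ℝ}
    (hg : ConvexOn ℝ (Icc a b) g) (hgi : IntervalIntegrable g volume a b) :
    g ((a + b)/2) * (b - a) ≤ ∫ x in a..b, g x := by
  have hba : (0:ℝ) < b - a := by linarith
  have hrefl : IntervalIntegrable (fun x => g (a + b - x)) volume a b := by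
    have h := (hgi.comp_sub_left (a + b)).symm
    simpa using h
  have heq : (∫ x in a..b, g (a + b - x)) = ∫ x in a..b, g x := by
    have h := intervalIntegral.integral_comp_sub_left g (a + b) (a := a) (b := b)
    simpa using h
  have hmono : ∫ _x in a..b, (2 * g ((a+b)/2)) ≤ ∫ x in a..b, (g x + g (a + b - x)) := by
    refine intervalIntegral.integral_mono_on hab.le
      intervalIntegrable_const (hgi.add hrefl) ?_
    intro x hx
    exact convex_midpoint_le hab hg hx
  rw [intervalIntegral.integral_const, intervalIntegral.integral_add hgi hrefl, heq] at hmono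
  simp only [smul_eq_mul] at hmono
  linarith

theorem hadamard_coordinated_two_dim
    (a b c d : ℝ) (hab : a < b) (hcd : c < d) (f : ℝ → ℝ → ℝ)
    (h1 : ∀ y ∈ Icc c d, ConvexOn ℝ (Icc a b) (fun x => f x y))
    (h2 : ∀ x ∈ Icc a b, ConvexOn ℝ (Icc c d) (fun y => f x y))
    (hint : IntegrableOn (fun p : ℝ × ℝ => f p.1 p.2) (Icc a b ×ˢ Icc c d))
    (hslice : ∀ x ∈ Icc a b, IntervalIntegrable (fun y => f x y) volume c d)
    (hiter : IntervalIntegrable (fun x => ∫ y in c..d, f x y) volume a b) :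
    f ((a+b)/2) ((c+d)/2) ≤
      (1/((b-a)*(d-c))) * ∫ x in a..b, ∫ y in c..d, f x y ∧
    (1/((b-a)*(d-c))) * ∫ x in a..b, ∫ y in c..d, f x y ≤
      (f a c + f a d + f b c + f b d) / 4 := by
  have hba : (0:ℝ) < b - a := by linarith
  have hdc : (0:ℝ) < d - c := by linarith
  have hP : (0:ℝ) < (b - a) * (d - c) := mul_pos hba hdc
  have hm1 : (a+b)/2 ∈ Icc a b := ⟨by linarith, by linarith⟩
  set μ := volume.restrict (Ioc a b) with hμ
  set ν := volume.restrict (Ioc c d) with hν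
  have hF : Integrable (fun p : ℝ × ℝ => f p.1 p.2) (μ.prod ν) := by
    rw [hμ, hν, Measure.prod_restrict, ← Measure.volume_eq_prod]
    exact hint.mono_set (Set.prod_mono Ioc_subset_Icc_self Ioc_subset_Icc_self)
  have hswap : (∫ x in a..b, ∫ y in c..d, f x y) = ∫ y in c..d, ∫ x in a..b, f x y := by
    simp_rw [intervalIntegral.integral_of_le hab.le, intervalIntegral.integral_of_le hcd.le]
    exact MeasureTheory.integral_integral_swap hF
  constructor
  · -- lower bound
    have hm1slice : IntervalIntegrable (fun y => f ((a+b)/2) y) volume c d := hslice _ hm1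
    have hlow1 : f ((a+b)/2) ((c+d)/2) * (d - c) ≤ ∫ y in c..d, f ((a+b)/2) y :=
      hh_lower hcd (h2 _ hm1) hm1slice
    have hae : ∀ᵐ y ∂(volume.restrict (Icc c d)),
        f ((a+b)/2) y * (b - a) ≤ ∫ x in a..b, f x y := by
      have h := hF.prod_left_ae
      rw [show ν = volume.restrict (Icc c d) from Measure.restrict_congr_set Ioc_ae_eq_Icc] at h
      filter_upwards [h, ae_restrict_mem measurableSet_Icc] with y hy hymem
      have hyi : IntervalIntegrable (fun x => f x y) volume a b := by
        rw [intervalIntegrable_iff_integrableOn_Ioc_of_le hab.le]; exact hy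
      exact hh_lower hab (h1 y hymem) hyi
    have hJi : IntervalIntegrable (fun y => ∫ x in a..b, f x y) volume c d := by
      rw [intervalIntegrable_iff_integrableOn_Ioc_of_le hcd.le]
      refine hF.integral_prod_right.congr ?_
      filter_upwards with y
      rw [intervalIntegral.integral_of_le hab.le]
    have hlow2 : (∫ y in c..d, f ((a+b)/2) y * (b - a)) ≤ ∫ y in c..d, ∫ x in a..b, f x y :=
      intervalIntegral.integral_mono_ae_restrict hcd.le (hm1slice.mul_const _) hJi hae
    rw [intervalIntegral.integral_mul_const (μ := volume)] at hlow2
    rw [one_div, le_inv_mul_iff₀ hP, hswap]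
    nlinarith [mul_le_mul_of_nonneg_right hlow1 hba.le]
  · -- upper bound
    have hedge_c : IntervalIntegrable (fun x => f x c) volume a b :=
      convex_intervalIntegrable hab (h1 c ⟨le_refl c, hcd.le⟩)
    have hedge_d : IntervalIntegrable (fun x => f x d) volume a b :=
      convex_intervalIntegrable hab (h1 d ⟨hcd.le, le_refl d⟩)
    have hup1 : ∀ x ∈ Icc a b, (∫ y in c..d, f x y) ≤ (d-c)/2 * f x c + (d-c)/2 * f x d := by
      intro x hx
      have := hh_upper hcd (h2 x hx) (hslice x hx)
      calc (∫ y in c..d, f x y) ≤ (f x c + f x d)/2 * (d - c) := this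
        _ = (d-c)/2 * f x c + (d-c)/2 * f x d := by ring
    have hGi : IntervalIntegrable (fun x => (d-c)/2 * f x c + (d-c)/2 * f x d) volume a b :=
      (hedge_c.const_mul _).add (hedge_d.const_mul _)
    have hup2 : (∫ x in a..b, ∫ y in c..d, f x y)
        ≤ ∫ x in a..b, ((d-c)/2 * f x c + (d-c)/2 * f x d) :=
      intervalIntegral.integral_mono_on hab.le hiter hGi hup1
    have hup3 : (∫ x in a..b, ((d-c)/2 * f x c + (d-c)/2 * f x d))
        = (d-c)/2 * (∫ x in a..b, f x c) + (d-c)/2 * (∫ x in a..b, f x d) := by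
      rw [intervalIntegral.integral_add (hedge_c.const_mul _) (hedge_d.const_mul _),
        intervalIntegral.integral_const_mul, intervalIntegral.integral_const_mul]
    have hXc : (∫ x in a..b, f x c) ≤ (f a c + f b c)/2 * (b - a) :=
      hh_upper hab (h1 c ⟨le_refl c, hcd.le⟩) hedge_c
    have hXd : (∫ x in a..b, f x d) ≤ (f a d + f b d)/2 * (b - a) :=
      hh_upper hab (h1 d ⟨hcd.le, le_refl d⟩) hedge_d
    rw [one_div, inv_mul_le_iff₀ hP]
    have hc1 := mul_le_mul_of_nonneg_left hXc (by positivity : (0:ℝ) ≤ (d-c)/2)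
    have hc2 := mul_le_mul_of_nonneg_left hXd (by positivity : (0:ℝ) ≤ (d-c)/2)
    nlinarith [hup2, hup3]
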